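/- Let m ≥ 1 and n ≥ 2m be integers. Then, as the complex variable t tends to 2m+1 within ℂ \ {2m+1}, the quotient ((1+t)/2)_n · ((1-t)/2)_n / ((2-t)_n · n!) tends to -((-1)^m/2) · ((3m)!·(m-1)!)/((2m-1)!·(2m)!) · ((3m+1)_{n-2m} · (m)_{n-2m})/((2m+1)_{n-2m} · (n-2m)!). -/

import Mathlib

open Filter Polynomial Finset

section helpers
private lemma asc_prod (n : ℕ) (x : ℂ) :
    (ascPochhammer ℂ n).eval x = ∏ k ∈ Finset.range n, (x + k) := by
  induction n with
  | zero => simp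
  | succ n ih => rw [ascPochhammer_succ_right, Finset.prod_range_succ, ← ih]; simp

private lemma neg_prod (a : ℕ) :
    ∏ k ∈ Finset.range a, (-(a : ℂ) + k) = (-1) ^ a * a.factorial := by
  rw [← asc_prod, ascPochhammer_eval_neg_eq_descPochhammer,
    descPochhammer_eval_eq_descFactorial, Nat.descFactorial_self]

private lemma fact_prod (N : ℕ) :
    ∏ j ∈ Finset.range N, ((1:ℂ) + j) = N.factorial := by
  induction N with
  | zero => simp
  | succ N ih =>
    rw [Finset.prod_range_succ, ih]
    push_cast [Nat.factorial_succ]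
    ring

private lemma asc_nat (a N : ℕ) :
    (ascPochhammer ℂ N).eval (a : ℂ) = (a.ascFactorial N : ℂ) := by
  rw [← ascPochhammer_eval_cast, ascPochhammer_nat_eq_ascFactorial]

private lemma ascF_div (a K : ℕ) :
    ((a+1).ascFactorial K : ℂ) = ((a + K).factorial : ℂ) / (a.factorial : ℂ) := by
  rw [eq_div_iff (by exact_mod_cast a.factorial_ne_zero)]
  exact_mod_cast (mul_comm (a.factorial) _ ▸ Nat.factorial_mul_ascFactorial a K)

private lemma erase_prod (j n : ℕ) (h : j < n) (f : ℕ → ℂ) :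
    ∏ k ∈ (Finset.range n).erase j, f k
      = (∏ k ∈ Finset.range j, f k) * ∏ k ∈ Finset.Ico (j+1) n, f k := by
  have hs : (Finset.range n).erase j = Finset.range j ∪ Finset.Ico (j+1) n := by
    ext k
    simp only [Finset.mem_erase, Finset.mem_union, Finset.mem_range, Finset.mem_Ico]
    omega
  rw [hs, Finset.prod_union]
  rw [Finset.disjoint_left]
  intro a ha hb
  simp only [Finset.mem_range, Finset.mem_Ico] at ha hb
  omega
end helpers

theorem pochhammer_quotient_limit (m n : ℕ) (hm : 1 ≤ m) (hn : 2 * m ≤ n) :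
    Tendsto
      (fun t : ℂ =>
        (ascPochhammer ℂ n).eval ((1 + t) / 2) * (ascPochhammer ℂ n).eval ((1 - t) / 2)
          / ((ascPochhammer ℂ n).eval (2 - t) * (n.factorial : ℂ)))
      (nhdsWithin (2 * (m : ℂ) + 1) {(2 * (m : ℂ) + 1)}ᶜ)
      (nhds (-((-1 : ℂ) ^ m / 2)
        * ((((3 * m).factorial : ℂ) * ((m - 1).factorial : ℂ))
            / (((2 * m - 1).factorial : ℂ) * ((2 * m).factorial : ℂ)))
        * (((ascPochhammer ℂ (n - 2 * m)).eval ((3 * (m : ℂ) + 1))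
              * (ascPochhammer ℂ (n - 2 * m)).eval (m : ℂ))
            / ((ascPochhammer ℂ (n - 2 * m)).eval (2 * (m : ℂ) + 1)
                * ((n - 2 * m).factorial : ℂ))))) := by
  obtain ⟨M, rfl⟩ : ∃ M, m = M + 1 := ⟨m - 1, by omega⟩
  obtain ⟨N, rfl⟩ : ∃ N, n = N + 2 * M + 2 := ⟨n - 2 * M - 2, by omega⟩
  clear hm hn
  set n' : ℕ := N + 2 * M + 2 with hn'
  set t₀ : ℂ := 2 * ((M + 1 : ℕ) : ℂ) + 1 with ht₀
  -- the regularized function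
  set A : ℂ → ℂ := fun t => ∏ k ∈ (Finset.range n').erase (M + 1), ((1 - t) / 2 + (k : ℂ)) with hA
  set B : ℂ → ℂ := fun t => ∏ k ∈ (Finset.range n').erase (2 * M + 1), ((2 - t) + (k : ℂ)) with hB
  set g : ℂ → ℂ := fun t =>
    (ascPochhammer ℂ n').eval ((1 + t) / 2) * A t / (2 * B t * (n'.factorial : ℂ)) with hg
  have hmlt : M + 1 < n' := by omega
  have h2mlt : 2 * M + 1 < n' := by omega
  -- Step 1: f = g away from t₀
  have heq : ∀ t : ℂ, t ≠ t₀ →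
      (ascPochhammer ℂ n').eval ((1 + t) / 2) * (ascPochhammer ℂ n').eval ((1 - t) / 2)
        / ((ascPochhammer ℂ n').eval (2 - t) * (n'.factorial : ℂ)) = g t := by
    intro t ht
    have hne : t₀ - t ≠ 0 := sub_ne_zero.mpr (Ne.symm ht)
    have h1 : (ascPochhammer ℂ n').eval ((1 - t) / 2)
        = ((1 - t) / 2 + ((M + 1 : ℕ) : ℂ)) * A t := by
      rw [asc_prod, ← Finset.mul_prod_erase _ _ (Finset.mem_range.mpr hmlt)]
    have h2 : (ascPochhammer ℂ n').eval (2 - t)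
        = ((2 - t) + ((2 * M + 1 : ℕ) : ℂ)) * B t := by
      rw [asc_prod, ← Finset.mul_prod_erase _ _ (Finset.mem_range.mpr h2mlt)]
    have hc : (1 - t) / 2 + ((M + 1 : ℕ) : ℂ) = (t₀ - t) / 2 := by
      rw [ht₀]; push_cast; ring
    have hd : (2 - t) + ((2 * M + 1 : ℕ) : ℂ) = t₀ - t := by
      rw [ht₀]; push_cast; ring
    rw [h1, h2, hc, hd]
    have e1 : (ascPochhammer ℂ n').eval ((1 + t) / 2) * ((t₀ - t) / 2 * A t)
        = (t₀ - t) / 2 * ((ascPochhammer ℂ n').eval ((1 + t) / 2) * A t) := by ring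
    have e2 : (t₀ - t) * B t * (n'.factorial : ℂ)
        = (t₀ - t) / 2 * (2 * B t * (n'.factorial : ℂ)) := by ring
    rw [e1, e2, mul_div_mul_left _ _ (div_ne_zero hne two_ne_zero)]
  -- Step 2: value of g at t₀
  have hAval : A t₀ = (-1) ^ (M + 1) * ((M + 1).factorial : ℂ) * ((N + M).factorial : ℂ) := by
    have hcongr : A t₀ = ∏ k ∈ (Finset.range n').erase (M + 1), (-(((M+1:ℕ)):ℂ) + (k : ℂ)) := by
      refine Finset.prod_congr rfl fun k _ => ?_
      rw [ht₀]; push_cast; ring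
    rw [hcongr, erase_prod _ _ hmlt, neg_prod]
    have : ∏ k ∈ Finset.Ico (M + 1 + 1) n', (-(((M+1:ℕ)):ℂ) + (k : ℂ))
        = ((N + M).factorial : ℂ) := by
      rw [Finset.prod_Ico_eq_prod_range, ← fact_prod (N + M)]
      have hcard : n' - (M + 1 + 1) = N + M := by omega
      rw [hcard]
      refine Finset.prod_congr rfl fun j _ => ?_
      push_cast; ring
    rw [this]
  have hBval : B t₀ = -(((2 * M + 1).factorial : ℂ) * (N.factorial : ℂ)) := by
    have hcongr : B t₀ = ∏ k ∈ (Finset.range n').erase (2 * M + 1),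
        (-(((2*M+1:ℕ)):ℂ) + (k : ℂ)) := by
      refine Finset.prod_congr rfl fun k _ => ?_
      rw [ht₀]; push_cast; ring
    rw [hcongr, erase_prod _ _ h2mlt, neg_prod]
    have : ∏ k ∈ Finset.Ico (2 * M + 1 + 1) n', (-(((2*M+1:ℕ)):ℂ) + (k : ℂ))
        = (N.factorial : ℂ) := by
      rw [Finset.prod_Ico_eq_prod_range, ← fact_prod N]
      have hcard : n' - (2 * M + 1 + 1) = N := by omega
      rw [hcard]
      refine Finset.prod_congr rfl fun j _ => ?_
      push_cast; ring
    rw [this]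
    have : ((-1 : ℂ)) ^ (2 * M + 1) = -1 := by
      rw [pow_succ, pow_mul]; norm_num
    rw [this]; ring
  have hBne : B t₀ ≠ 0 := by
    rw [hBval]
    push_cast
    refine neg_ne_zero.mpr (mul_ne_zero ?_ ?_) <;>
      exact_mod_cast Nat.factorial_ne_zero _
  -- Step 3: continuity of g at t₀
  have hcontA : Continuous A := by
    apply continuous_finset_prod
    intro k _
    fun_prop
  have hcontB : Continuous B := by
    apply continuous_finset_prod
    intro k _
    fun_prop
  have hcontP : Continuous fun t : ℂ => (ascPochhammer ℂ n').eval ((1 + t) / 2) :=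
    (Polynomial.continuous _).comp (by fun_prop)
  have hden : (2 * B t₀ * (n'.factorial : ℂ)) ≠ 0 := by
    refine mul_ne_zero (mul_ne_zero two_ne_zero hBne) ?_
    exact_mod_cast Nat.factorial_ne_zero _
  have hcont : ContinuousAt g t₀ :=
    ((hcontP.mul hcontA).continuousAt).div
      (((continuous_const.mul hcontB).mul continuous_const).continuousAt) hden
  -- Step 4: the value
  have hval : g t₀ = -((-1 : ℂ) ^ (M+1) / 2)
        * ((((3 * (M+1)).factorial : ℂ) * (((M+1) - 1).factorial : ℂ))
            / (((2 * (M+1) - 1).factorial : ℂ) * ((2 * (M+1)).factorial : ℂ)))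
        * (((ascPochhammer ℂ (n' - 2 * (M+1))).eval ((3 * ((M+1:ℕ) : ℂ) + 1))
              * (ascPochhammer ℂ (n' - 2 * (M+1))).eval ((M+1:ℕ) : ℂ))
            / ((ascPochhammer ℂ (n' - 2 * (M+1))).eval (2 * ((M+1:ℕ) : ℂ) + 1)
                * ((n' - 2 * (M+1)).factorial : ℂ))) := by
    have hsub : n' - 2 * (M + 1) = N := by omega
    have hs1 : (M + 1 : ℕ) - 1 = M := by omega
    have hs2 : 2 * (M + 1) - 1 = 2 * M + 1 := by omega
    have hs3 : 3 * (M + 1) = 3 * M + 3 := by omega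
    have hs4 : 2 * (M + 1) = 2 * M + 2 := by omega
    rw [hsub, hs1, hs2, hs3, hs4]
    have harg1 : (1 + t₀) / 2 = ((M + 2 : ℕ) : ℂ) := by rw [ht₀]; push_cast; ring
    have harg2 : 3 * ((M+1:ℕ) : ℂ) + 1 = ((3 * M + 4 : ℕ) : ℂ) := by push_cast; ring
    have harg3 : 2 * ((M+1:ℕ) : ℂ) + 1 = ((2 * M + 3 : ℕ) : ℂ) := by push_cast; ring
    rw [hg]
    simp only [harg1, harg2, harg3, hAval, hBval]
    rw [asc_nat, asc_nat, asc_nat, asc_nat]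
    rw [show (M + 2) = (M + 1) + 1 from rfl, ascF_div,
        show (3 * M + 4) = (3 * M + 3) + 1 from rfl, ascF_div,
        show (2 * M + 3) = (2 * M + 2) + 1 from rfl, ascF_div]
    rw [ascF_div (2 * M + 2) N]
    have f1 : ((M + 1).factorial : ℂ) ≠ 0 := by exact_mod_cast Nat.factorial_ne_zero _
    have f2 : ((3 * M + 3).factorial : ℂ) ≠ 0 := by exact_mod_cast Nat.factorial_ne_zero _
    have f3 : ((2 * M + 2).factorial : ℂ) ≠ 0 := by exact_mod_cast Nat.factorial_ne_zero _
    have f4 : (M.factorial : ℂ) ≠ 0 := by exact_mod_cast Nat.factorial_ne_zero _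
    have f5 : ((2 * M + 1).factorial : ℂ) ≠ 0 := by exact_mod_cast Nat.factorial_ne_zero _
    have f6 : (N.factorial : ℂ) ≠ 0 := by exact_mod_cast Nat.factorial_ne_zero _
    have f7 : (n'.factorial : ℂ) ≠ 0 := by exact_mod_cast Nat.factorial_ne_zero _
    have f8 : ((N + M).factorial : ℂ) ≠ 0 := by exact_mod_cast Nat.factorial_ne_zero _
    have hidx1 : (M + 1) + n' = N + 3 * M + 3 := by omega
    have hidx2 : (3 * M + 3) + N = N + 3 * M + 3 := by omega
    have hidx3 : (2 * M + 2) + N = n' := by omega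
    have hidx4 : M + N = N + M := by omega
    rw [hidx1, hidx2, hidx3, hidx4]
    have f9 : ((N + 3 * M + 3).factorial : ℂ) ≠ 0 := by exact_mod_cast Nat.factorial_ne_zero _
    field_simp
  -- Conclude
  have hlim : Tendsto g (nhdsWithin t₀ {t₀}ᶜ) (nhds (g t₀)) := hcont.continuousWithinAt
  rw [hval] at hlim
  have hmain := hlim.congr'
    (Filter.eventuallyEq_of_mem self_mem_nhdsWithin fun t ht => (heq t ht).symm)
  -- match the statement's cast forms
  convert hmain using 2 <;> push_cast <;> rfl
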